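/- Let p > 2 and ν > 0 be real numbers. There exists a constant C > 0, depending only on p and ν, with the following property. Let g : ℝ² → ℝ be continuously differentiable with g(s, t+1) = g(s, t) for all (s, t) ∈ ℝ², and suppose M := (∫_{[0,∞) × [0,1]} e^{pνs} · (|g(s,t)|^p + ‖Dg(s,t)‖^p) ds dt)^{1/p} < ∞. Then for all s ≥ 0 and all t ∈ ℝ: |g(s, t)| ≤ C · e^{−νs} · M; in particular, sup_{t} |g(s,t)| → 0 as s → ∞. -/

import Mathlib

set_option maxHeartbeats 1000000


open MeasureTheory Set


-- Hölder helper: ∫_A f ≤ (∫_A f^p)^(1/p) * (vol A)^(1/q)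
lemma holder_helper {p q : ℝ} (hpq : p.HolderConjugate q) {f : ℝ × ℝ → ℝ}
    (hf : Continuous f) (hf0 : ∀ z, 0 ≤ f z) {A : Set (ℝ × ℝ)}
    (hAm : MeasurableSet A) (hAc : IsCompact A) :
    ∫ z in A, f z ≤ (∫ z in A, f z ^ p) ^ (1 / p) * ((volume A).toReal) ^ (1 / q) := by
  haveI : IsFiniteMeasure (volume.restrict A) :=
    ⟨by rw [Measure.restrict_apply_univ]; exact hAc.measure_lt_top⟩
  obtain ⟨C, hC⟩ := hAc.exists_bound_of_continuousOn hf.continuousOn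
  have hmem : MemLp f (ENNReal.ofReal p) (volume.restrict A) :=
    MemLp.of_bound hf.aestronglyMeasurable.restrict C
      ((ae_restrict_iff' hAm).2 (Filter.Eventually.of_forall hC))
  have hmem1 : MemLp (fun _ : ℝ × ℝ => (1 : ℝ)) (ENNReal.ofReal q) (volume.restrict A) :=
    memLp_const 1
  have h := integral_mul_le_Lp_mul_Lq_of_nonneg hpq
    (Filter.Eventually.of_forall hf0) (Filter.Eventually.of_forall fun _ => zero_le_one)
    hmem hmem1 (μ := volume.restrict A)
  simpa [Real.one_rpow, smul_eq_mul, measureReal_def] using h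

-- image of the unit square under y ↦ x + θ • (y - x)
lemma image_square {x : ℝ × ℝ} {θ : ℝ} (hθ : 0 < θ) (hθ1 : θ ≤ 1) :
    (fun y : ℝ × ℝ => x + θ • (y - x)) '' (Icc x.1 (x.1 + 1) ×ˢ Icc x.2 (x.2 + 1)) =
      Icc x.1 (x.1 + θ) ×ˢ Icc x.2 (x.2 + θ) := by
  ext z
  simp only [Set.mem_image, Set.mem_prod, Set.mem_Icc, Prod.ext_iff, Prod.fst_add,
    Prod.snd_add, Prod.smul_fst, Prod.smul_snd, Prod.fst_sub, Prod.snd_sub, smul_eq_mul]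
  constructor
  · rintro ⟨y, ⟨⟨h1, h2⟩, h3, h4⟩, hz1, hz2⟩
    refine ⟨⟨?_, ?_⟩, ?_, ?_⟩ <;> nlinarith
  · rintro ⟨⟨h1, h2⟩, h3, h4⟩
    refine ⟨x + θ⁻¹ • (z - x), ⟨⟨?_, ?_⟩, ?_, ?_⟩, ?_, ?_⟩
    · simp only [Prod.fst_add, Prod.smul_fst, Prod.fst_sub, smul_eq_mul]
      nlinarith [mul_nonneg (inv_nonneg.2 hθ.le) (sub_nonneg.2 h1)]
    · simp only [Prod.fst_add, Prod.smul_fst, Prod.fst_sub, smul_eq_mul]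
      have : θ⁻¹ * (z.1 - x.1) ≤ θ⁻¹ * θ := by
        apply mul_le_mul_of_nonneg_left (by linarith) (inv_nonneg.2 hθ.le)
      rw [inv_mul_cancel₀ hθ.ne'] at this
      linarith
    · simp only [Prod.snd_add, Prod.smul_snd, Prod.snd_sub, smul_eq_mul]
      nlinarith [mul_nonneg (inv_nonneg.2 hθ.le) (sub_nonneg.2 h3)]
    · simp only [Prod.snd_add, Prod.smul_snd, Prod.snd_sub, smul_eq_mul]
      have : θ⁻¹ * (z.2 - x.2) ≤ θ⁻¹ * θ := by
        apply mul_le_mul_of_nonneg_left (by linarith) (inv_nonneg.2 hθ.le)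
      rw [inv_mul_cancel₀ hθ.ne'] at this
      linarith
    · simp only [Prod.fst_add, Prod.smul_fst, Prod.fst_sub, smul_eq_mul]
      field_simp
      ring
    · simp only [Prod.snd_add, Prod.smul_snd, Prod.snd_sub, smul_eq_mul]
      field_simp
      ring

-- determinant of θ • id on ℝ × ℝ
lemma det_smul_id (θ : ℝ) :
    (θ • (ContinuousLinearMap.id ℝ (ℝ × ℝ))).det = θ ^ 2 := by
  rw [ContinuousLinearMap.det, ContinuousLinearMap.coe_smul, ContinuousLinearMap.coe_id,
    LinearMap.det_smul, LinearMap.det_id]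
  simp [Module.finrank_prod]

lemma slice_bound {p : ℝ} (hp : 2 < p) {g : ℝ × ℝ → ℝ} (hg : ContDiff ℝ 1 g)
    (x : ℝ × ℝ) {θ : ℝ} (hθ : 0 < θ) (hθ1 : θ ≤ 1) :
    |∫ y in Icc x.1 (x.1 + 1) ×ˢ Icc x.2 (x.2 + 1),
        (fderiv ℝ g (x + θ • (y - x))) (y - x)| ≤
      (∫ z in Icc x.1 (x.1 + 1) ×ˢ Icc x.2 (x.2 + 1), ‖fderiv ℝ g z‖ ^ p) ^ (1 / p) *
        θ ^ (-2 / p) := by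
  have hp0 : 0 < p := by linarith
  set Q : Set (ℝ × ℝ) := Icc x.1 (x.1 + 1) ×ˢ Icc x.2 (x.2 + 1) with hQ
  set Qθ : Set (ℝ × ℝ) := Icc x.1 (x.1 + θ) ×ˢ Icc x.2 (x.2 + θ) with hQθ
  have hQm : MeasurableSet Q := measurableSet_Icc.prod measurableSet_Icc
  have hQθm : MeasurableSet Qθ := measurableSet_Icc.prod measurableSet_Icc
  have hQc : IsCompact Q := isCompact_Icc.prod isCompact_Icc
  have hQθc : IsCompact Qθ := isCompact_Icc.prod isCompact_Icc
  have hD : Continuous (fderiv ℝ g) := hg.continuous_fderiv one_ne_zero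
  have hDp : Continuous (fun z => ‖fderiv ℝ g z‖ ^ p) :=
    hD.norm.rpow_const fun z => Or.inr hp0.le
  have hDp0 : ∀ z : ℝ × ℝ, 0 ≤ ‖fderiv ℝ g z‖ ^ p :=
    fun z => Real.rpow_nonneg (norm_nonneg _) _
  have hφ : Continuous (fun y : ℝ × ℝ => x + θ • (y - x)) := by continuity
  -- step 1 : bound by the integral of norms
  have step1 : |∫ y in Q, (fderiv ℝ g (x + θ • (y - x))) (y - x)| ≤
      ∫ y in Q, ‖fderiv ℝ g (x + θ • (y - x))‖ := by
    have h1 : |∫ y in Q, (fderiv ℝ g (x + θ • (y - x))) (y - x)| ≤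
        ∫ y in Q, ‖(fderiv ℝ g (x + θ • (y - x))) (y - x)‖ := by
      simpa [Real.norm_eq_abs] using
        norm_integral_le_integral_norm (μ := volume.restrict Q)
          (f := fun y : ℝ × ℝ => (fderiv ℝ g (x + θ • (y - x))) (y - x))
    refine h1.trans (setIntegral_mono_on ?_ ?_ hQm ?_)
    · exact (((hD.comp hφ).clm_apply
        (continuous_id.sub continuous_const)).norm).continuousOn.integrableOn_compact hQc
    · exact ((hD.comp hφ).norm).continuousOn.integrableOn_compact hQc
    · intro y hy
      refine (ContinuousLinearMap.le_opNorm _ _).trans ?_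
      have h2 : ‖y - x‖ ≤ 1 := by
        rw [Prod.norm_def]
        rcases hy with ⟨hy1, hy2⟩
        simp only [Set.mem_Icc] at hy1 hy2
        simp only [Prod.fst_sub, Prod.snd_sub, Real.norm_eq_abs]
        rw [max_le_iff]
        constructor <;> rw [abs_le] <;> constructor <;> linarith
      nlinarith [norm_nonneg (fderiv ℝ g (x + θ • (y - x)))]
  -- step 2 : change of variables
  have step2 : ∫ z in Qθ, ‖fderiv ℝ g z‖ =
      θ ^ 2 * ∫ y in Q, ‖fderiv ℝ g (x + θ • (y - x))‖ := by
    have hder : ∀ y ∈ Q, HasFDerivWithinAt (fun y : ℝ × ℝ => x + θ • (y - x))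
        (θ • (ContinuousLinearMap.id ℝ (ℝ × ℝ))) Q y := by
      intro y _
      exact ((((hasFDerivAt_id y).sub_const x).const_smul θ).const_add x).hasFDerivWithinAt
    have hinj : Set.InjOn (fun y : ℝ × ℝ => x + θ • (y - x)) Q := by
      intro a _ b _ hab
      simp only [add_right_inj] at hab
      have := smul_right_injective (ℝ × ℝ) hθ.ne' hab
      simpa [sub_left_inj] using this
    have := integral_image_eq_integral_abs_det_fderiv_smul volume hQm hder hinj
      (fun z => ‖fderiv ℝ g z‖)
    rw [image_square hθ hθ1] at this
    rw [← hQθ] at this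
    rw [this]
    simp only [det_smul_id, abs_of_nonneg (by positivity : (0:ℝ) ≤ θ ^ 2), smul_eq_mul]
    rw [MeasureTheory.integral_const_mul]
  -- conjugate exponent
  have hp1 : 1 < p := by linarith
  set q : ℝ := p.conjExponent with hq
  have hpq : p.HolderConjugate q := Real.HolderConjugate.conjExponent hp1
  have hinvq : 1 / q = 1 - 1 / p := by
    have := hpq.inv_add_inv_eq_one
    rw [one_div, one_div]
    linarith
  -- volume of Qθ
  have hvol : ((volume Qθ).toReal) = θ ^ 2 := by
    rw [hQθ, MeasureTheory.Measure.volume_eq_prod, Measure.prod_prod]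
    simp only [Real.volume_Icc]
    rw [ENNReal.toReal_mul, ENNReal.toReal_ofReal (by linarith), ENNReal.toReal_ofReal (by linarith)]
    ring
  -- Hölder on Qθ
  have hold := holder_helper hpq hD.norm (fun z => norm_nonneg _) hQθm hQθc
  rw [hvol] at hold
  -- monotonicity Qθ ⊆ Q
  have hsub : Qθ ⊆ Q := by
    rw [hQθ, hQ]
    exact Set.prod_mono (Set.Icc_subset_Icc_right (by linarith))
      (Set.Icc_subset_Icc_right (by linarith))
  have hmono : ∫ z in Qθ, ‖fderiv ℝ g z‖ ^ p ≤ ∫ z in Q, ‖fderiv ℝ g z‖ ^ p := by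
    apply setIntegral_mono_set (hDp.continuousOn.integrableOn_compact hQc)
      (Filter.Eventually.of_forall fun z => hDp0 z)
      (HasSubset.Subset.eventuallyLE hsub)
  set K : ℝ := (∫ z in Q, ‖fderiv ℝ g z‖ ^ p) ^ (1 / p) with hK
  have hK0 : 0 ≤ K := Real.rpow_nonneg
    (setIntegral_nonneg hQm fun z _ => hDp0 z) _
  have hold2 : ∫ z in Qθ, ‖fderiv ℝ g z‖ ≤ K * (θ ^ 2) ^ (1 / q) := by
    refine hold.trans (mul_le_mul_of_nonneg_right ?_ ?_)
    · exact Real.rpow_le_rpow (setIntegral_nonneg hQθm fun z _ => hDp0 z) hmono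
        (by positivity)
    · positivity
  -- put everything together
  have hQint : ∫ y in Q, ‖fderiv ℝ g (x + θ • (y - x))‖ =
      θ⁻¹ ^ 2 * ∫ z in Qθ, ‖fderiv ℝ g z‖ := by
    rw [step2]
    field_simp
  refine step1.trans ?_
  rw [hQint]
  have h1 : θ⁻¹ ^ 2 = θ ^ ((-2 : ℝ)) := by
    rw [← Real.rpow_neg_one θ, ← Real.rpow_natCast (θ ^ ((-1:ℝ))) 2,
      ← Real.rpow_mul hθ.le]
    norm_num
  have h2 : ((θ ^ 2 : ℝ)) ^ (1 / q) = θ ^ ((2 : ℝ) * (1 / q)) := by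
    rw [← Real.rpow_natCast θ 2, ← Real.rpow_mul hθ.le]
    norm_num
  have hfin : θ⁻¹ ^ 2 * (K * (θ ^ 2) ^ (1 / q)) = K * θ ^ (-2 / p) := by
    rw [h1, h2, mul_comm (θ ^ ((-2:ℝ))) _, mul_assoc, ← Real.rpow_add hθ]
    congr 2
    rw [hinvq]
    field_simp
    ring
  calc θ⁻¹ ^ 2 * ∫ z in Qθ, ‖fderiv ℝ g z‖ ≤ θ⁻¹ ^ 2 * (K * (θ ^ 2) ^ (1 / q)) := by
        apply mul_le_mul_of_nonneg_left hold2 (by positivity)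
    _ = K * θ ^ (-2 / p) := hfin

lemma morrey {p : ℝ} (hp : 2 < p) {g : ℝ × ℝ → ℝ} (hg : ContDiff ℝ 1 g) (x : ℝ × ℝ) :
    |g x| ≤ (1 + p / (p - 2)) *
      (∫ y in Icc x.1 (x.1 + 1) ×ˢ Icc x.2 (x.2 + 1),
        (|g y| ^ p + ‖fderiv ℝ g y‖ ^ p)) ^ (1 / p) := by
  have hp0 : 0 < p := by linarith
  have hp1 : 1 < p := by linarith
  set Q : Set (ℝ × ℝ) := Icc x.1 (x.1 + 1) ×ˢ Icc x.2 (x.2 + 1) with hQdef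
  have hQm : MeasurableSet Q := measurableSet_Icc.prod measurableSet_Icc
  have hQc : IsCompact Q := isCompact_Icc.prod isCompact_Icc
  have hD : Continuous (fderiv ℝ g) := hg.continuous_fderiv one_ne_zero
  have hgc : Continuous g := hg.continuous
  have hvolQ : (volume Q).toReal = 1 := by
    rw [hQdef, MeasureTheory.Measure.volume_eq_prod, Measure.prod_prod]
    simp only [Real.volume_Icc]
    rw [ENNReal.toReal_mul, ENNReal.toReal_ofReal (by linarith), ENNReal.toReal_ofReal (by linarith)]
    ring
  -- FTC along segments
  have hftc : ∀ y : ℝ × ℝ, g x - g y =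
      -∫ θ in Ioc (0:ℝ) 1, (fderiv ℝ g (x + θ • (y - x))) (y - x) := by
    intro y
    have hpath : ∀ θ : ℝ, HasDerivAt (fun τ : ℝ => g (x + τ • (y - x)))
        ((fderiv ℝ g (x + θ • (y - x))) (y - x)) θ := by
      intro θ
      have h1 : HasDerivAt (fun τ : ℝ => x + τ • (y - x)) (y - x) θ := by
        simpa using ((hasDerivAt_id θ).smul_const (y - x)).const_add x
      exact (hg.differentiable one_ne_zero _).hasFDerivAt.comp_hasDerivAt θ h1
    have hcont : Continuous fun θ : ℝ => (fderiv ℝ g (x + θ • (y - x))) (y - x) := by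
      refine Continuous.clm_apply (hD.comp ?_) continuous_const
      exact continuous_const.add (continuous_id.smul continuous_const)
    have h2 := intervalIntegral.integral_eq_sub_of_hasDerivAt
      (f := fun τ : ℝ => g (x + τ • (y - x))) (fun θ _ => hpath θ)
      (hcont.intervalIntegrable 0 1)
    rw [intervalIntegral.integral_of_le zero_le_one] at h2
    rw [h2]
    simp
  -- Fubini
  have hJcont : Continuous fun z : (ℝ × ℝ) × ℝ =>
      (fderiv ℝ g (x + z.2 • (z.1 - x))) (z.1 - x) := by
    refine Continuous.clm_apply (hD.comp ?_) (continuous_fst.sub continuous_const)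
    exact continuous_const.add (continuous_snd.smul (continuous_fst.sub continuous_const))
  have hJint : Integrable
      (Function.uncurry fun (y : ℝ × ℝ) (θ : ℝ) =>
        (fderiv ℝ g (x + θ • (y - x))) (y - x))
      ((volume.restrict Q).prod (volume.restrict (Ioc (0:ℝ) 1))) := by
    rw [Measure.prod_restrict, ← MeasureTheory.Measure.volume_eq_prod]
    exact (hJcont.continuousOn.integrableOn_compact (hQc.prod isCompact_Icc)).mono_set
      (Set.prod_mono subset_rfl Ioc_subset_Icc_self)
  have hswap := MeasureTheory.integral_integral_swap hJint
  -- difference to the mean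
  set A : ℝ := ∫ y in Q, g y with hA
  have hgQ : IntegrableOn g Q volume := hgc.continuousOn.integrableOn_compact hQc
  have hdiff : g x - A = -∫ θ in Ioc (0:ℝ) 1, ∫ y in Q,
      (fderiv ℝ g (x + θ • (y - x))) (y - x) := by
    have h3 : ∫ y in Q, (g x - g y) = g x - A := by
      rw [integral_sub (integrableOn_const (C := g x) hQc.measure_lt_top.ne) hgQ]
      rw [setIntegral_const, measureReal_def, hvolQ]
      simp [hA]
    rw [← h3]
    have h4 : ∫ y in Q, (g x - g y) =
        ∫ y in Q, (-∫ θ in Ioc (0:ℝ) 1, (fderiv ℝ g (x + θ • (y - x))) (y - x)) := by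
      exact setIntegral_congr_fun hQm fun y _ => hftc y
    rw [h4, integral_neg, hswap]
  -- bound the double integral
  set K : ℝ := (∫ z in Q, ‖fderiv ℝ g z‖ ^ p) ^ (1 / p) with hK
  have hK0 : 0 ≤ K := Real.rpow_nonneg
    (setIntegral_nonneg hQm fun z _ => Real.rpow_nonneg (norm_nonneg _) _) _
  have hmajint : IntegrableOn (fun θ : ℝ => K * θ ^ (-2 / p)) (Ioc (0:ℝ) 1) volume := by
    have h5 : IntervalIntegrable (fun θ : ℝ => θ ^ (-2 / p)) volume 0 1 :=
      intervalIntegral.intervalIntegrable_rpow' (by rw [neg_div]; rw [neg_lt_neg_iff]; rw [div_lt_one hp0]; linarith)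
    rw [intervalIntegrable_iff, Set.uIoc_of_le zero_le_one] at h5
    exact h5.const_mul K
  have hinner_int : Integrable (fun θ : ℝ => ∫ y in Q,
      (fderiv ℝ g (x + θ • (y - x))) (y - x)) (volume.restrict (Ioc (0:ℝ) 1)) := by
    exact hJint.swap.integral_prod_left
  have hbound : |g x - A| ≤ K * (p / (p - 2)) := by
    rw [hdiff, abs_neg]
    have h6 : |∫ θ in Ioc (0:ℝ) 1, ∫ y in Q,
        (fderiv ℝ g (x + θ • (y - x))) (y - x)| ≤
        ∫ θ in Ioc (0:ℝ) 1, |∫ y in Q, (fderiv ℝ g (x + θ • (y - x))) (y - x)| := by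
      simpa [Real.norm_eq_abs] using norm_integral_le_integral_norm
        (μ := volume.restrict (Ioc (0:ℝ) 1))
        (f := fun θ : ℝ => ∫ y in Q, (fderiv ℝ g (x + θ • (y - x))) (y - x))
    refine h6.trans ?_
    have h7 : ∫ θ in Ioc (0:ℝ) 1, |∫ y in Q,
        (fderiv ℝ g (x + θ • (y - x))) (y - x)| ≤
        ∫ θ in Ioc (0:ℝ) 1, K * θ ^ (-2 / p) := by
      refine integral_mono_ae hinner_int.abs hmajint ?_
      refine (ae_restrict_iff' measurableSet_Ioc).2 (Filter.Eventually.of_forall ?_)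
      intro θ hθ
      show |∫ y in Q, (fderiv ℝ g (x + θ • (y - x))) (y - x)| ≤ K * θ ^ (-2 / p)
      rw [hK, mul_comm]
      exact slice_bound hp hg x hθ.1 hθ.2 |>.trans_eq (mul_comm _ _)
    refine h7.trans ?_
    rw [MeasureTheory.integral_const_mul]
    have h8 : ∫ θ in Ioc (0:ℝ) 1, θ ^ (-2 / p) = p / (p - 2) := by
      rw [← intervalIntegral.integral_of_le zero_le_one]
      rw [integral_rpow (Or.inl (by rw [neg_div, neg_lt_neg_iff, div_lt_one hp0]; linarith))]
      rw [Real.one_rpow, Real.zero_rpow (by intro h; rw [← eq_neg_iff_add_eq_zero] at h; rw [neg_div] at h; field_simp at h; linarith)]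
      field_simp
      ring
    rw [h8]
  -- bound the mean
  have hq : p.HolderConjugate p.conjExponent := Real.HolderConjugate.conjExponent hp1
  have hmean : |A| ≤ (∫ y in Q, |g y| ^ p) ^ (1 / p) := by
    have h9 : |A| ≤ ∫ y in Q, |g y| := by
      simpa [Real.norm_eq_abs] using norm_integral_le_integral_norm
        (μ := volume.restrict Q) (f := g)
    refine h9.trans ?_
    have h10 := holder_helper hq hgc.abs (fun z => abs_nonneg _) hQm hQc
    rw [hvolQ, Real.one_rpow, mul_one] at h10
    exact h10
  -- combine
  have habs : Continuous fun y : ℝ × ℝ => |g y| ^ p := hgc.abs.rpow_const fun z => Or.inr hp0.le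
  have hDp : Continuous (fun z : ℝ × ℝ => ‖fderiv ℝ g z‖ ^ p) :=
    hD.norm.rpow_const fun z => Or.inr hp0.le
  set a : ℝ := ∫ y in Q, |g y| ^ p with ha
  set b : ℝ := ∫ z in Q, ‖fderiv ℝ g z‖ ^ p with hb
  have ha0 : 0 ≤ a := setIntegral_nonneg hQm fun z _ => Real.rpow_nonneg (abs_nonneg _) _
  have hb0 : 0 ≤ b := setIntegral_nonneg hQm fun z _ => Real.rpow_nonneg (norm_nonneg _) _
  have hS : ∫ y in Q, (|g y| ^ p + ‖fderiv ℝ g y‖ ^ p) = a + b := by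
    rw [integral_add (habs.continuousOn.integrableOn_compact hQc)
      (hDp.continuousOn.integrableOn_compact hQc)]
  have hcoef : 0 < p / (p - 2) := div_pos (by linarith) (by linarith)
  have h11 : |g x| ≤ |A| + |g x - A| := by
    have := abs_add_le A (g x - A)
    simpa using this
  rw [hS]
  have h12 : a ^ (1 / p) ≤ (a + b) ^ (1 / p) :=
    Real.rpow_le_rpow ha0 (by linarith) (by positivity)
  have h13 : K ≤ (a + b) ^ (1 / p) :=
    Real.rpow_le_rpow hb0 (by linarith) (by positivity)
  calc |g x| ≤ |A| + |g x - A| := h11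
    _ ≤ (a ^ (1 / p)) + K * (p / (p - 2)) := add_le_add hmean hbound
    _ ≤ (a + b) ^ (1 / p) + (a + b) ^ (1 / p) * (p / (p - 2)) := by
        refine add_le_add h12 (mul_le_mul_of_nonneg_right h13 hcoef.le)
    _ = (1 + p / (p - 2)) * (a + b) ^ (1 / p) := by ring

/-- Exponential decay along a cylindrical end: for `p > 2` and `ν > 0` there is
`C = C(p, ν) > 0` such that every `C¹` function `g : ℝ² → ℝ` which is `1`-periodic in the
second variable and has finite weighted norm
`M = (∫_{[0,∞)×[0,1]} e^{pνs}(|g|^p + ‖Dg‖^p) ds dt)^{1/p}` satisfies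
`|g(s,t)| ≤ C e^{−νs} M` for all `s ≥ 0` and `t ∈ ℝ`; in particular
`sup_t |g(s,t)| → 0` as `s → ∞`. -/
theorem exponential_decay_on_cylinder (p ν : ℝ) (hp : 2 < p) (hν : 0 < ν) :
    ∃ C > 0, ∀ g : ℝ × ℝ → ℝ, ContDiff ℝ 1 g →
      (∀ s t : ℝ, g (s, t + 1) = g (s, t)) →
      IntegrableOn
        (fun q : ℝ × ℝ => Real.exp (p * ν * q.1) * (|g q| ^ p + ‖fderiv ℝ g q‖ ^ p))
        (Set.Ici (0 : ℝ) ×ˢ Set.Icc (0 : ℝ) 1) volume →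
      (∀ s ≥ (0 : ℝ), ∀ t : ℝ,
          |g (s, t)| ≤
            C * Real.exp (-ν * s) *
              (∫ q in Set.Ici (0 : ℝ) ×ˢ Set.Icc (0 : ℝ) 1,
                  Real.exp (p * ν * q.1) * (|g q| ^ p + ‖fderiv ℝ g q‖ ^ p)) ^ (1 / p)) ∧
        Filter.Tendsto (fun s : ℝ => ⨆ t : ℝ, |g (s, t)|) Filter.atTop (nhds 0) := by
  have hp0 : 0 < p := by linarith
  refine ⟨1 + p / (p - 2), by
    have : 0 < p / (p - 2) := div_pos (by linarith) (by linarith)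
    linarith, ?_⟩
  intro g hg hper hint
  set C : ℝ := 1 + p / (p - 2) with hC
  have hCpos : 0 < C := by
    have : 0 < p / (p - 2) := div_pos (by linarith) (by linarith)
    rw [hC]; linarith
  set H : ℝ × ℝ → ℝ := fun q => |g q| ^ p + ‖fderiv ℝ g q‖ ^ p with hH
  set F : ℝ × ℝ → ℝ := fun q => Real.exp (p * ν * q.1) * H q with hF
  set I : ℝ := ∫ q in Set.Ici (0 : ℝ) ×ˢ Set.Icc (0 : ℝ) 1, F q with hI
  have hD : Continuous (fderiv ℝ g) := hg.continuous_fderiv one_ne_zero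
  have hgc : Continuous g := hg.continuous
  have hHcont : Continuous H :=
    (hgc.abs.rpow_const fun z => Or.inr hp0.le).add
      (hD.norm.rpow_const fun z => Or.inr hp0.le)
  have hH0 : ∀ q, 0 ≤ H q := fun q =>
    add_nonneg (Real.rpow_nonneg (abs_nonneg _) _) (Real.rpow_nonneg (norm_nonneg _) _)
  have hFcont : Continuous F :=
    ((Real.continuous_exp.comp (continuous_const.mul continuous_fst))).mul hHcont
  have hF0 : ∀ q, 0 ≤ F q := fun q => mul_nonneg (Real.exp_nonneg _) (hH0 q)
  have hstripm : MeasurableSet (Set.Ici (0:ℝ) ×ˢ Set.Icc (0:ℝ) 1) :=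
    measurableSet_Ici.prod measurableSet_Icc
  have hI0 : 0 ≤ I := setIntegral_nonneg hstripm fun q _ => hF0 q
  -- periodicity of the derivative
  have hDper : ∀ r u : ℝ, fderiv ℝ g (r, u + 1) = fderiv ℝ g (r, u) := by
    have hfun : (fun w : ℝ × ℝ => g (w + ((0:ℝ), (1:ℝ)))) = g := by
      funext w
      show g (w.1 + 0, w.2 + 1) = g w
      rw [add_zero]
      exact hper w.1 w.2
    have key : ∀ z : ℝ × ℝ, fderiv ℝ g (z + ((0:ℝ), (1:ℝ))) = fderiv ℝ g z := by
      intro z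
      have hid : HasFDerivAt (fun w : ℝ × ℝ => w + ((0:ℝ), (1:ℝ)))
          (ContinuousLinearMap.id ℝ (ℝ × ℝ)) z := (hasFDerivAt_id z).add_const _
      have h1 : HasFDerivAt (fun w : ℝ × ℝ => g (w + ((0:ℝ), (1:ℝ))))
          (fderiv ℝ g (z + ((0:ℝ), (1:ℝ)))) z := by
        simpa [Function.comp_def] using ((hg.differentiable one_ne_zero _).hasFDerivAt.comp z hid)
      have h2 := h1.fderiv
      rw [hfun] at h2
      exact h2.symm
    intro r u
    have := key (r, u)
    simpa [Prod.mk_add_mk] using this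
  have hHper : ∀ r u : ℝ, H (r, u + 1) = H (r, u) := by
    intro r u
    simp only [hH]
    rw [hper r u, hDper r u]
  -- integer periodicity of g
  have hgZ : ∀ (s t : ℝ) (n : ℤ), g (s, t + n) = g (s, t) := by
    intro s t n
    induction n using Int.induction_on with
    | zero => simp
    | succ k ih =>
        have e : t + ((↑k + 1 : ℤ) : ℝ) = (t + ((↑k : ℤ) : ℝ)) + 1 := by push_cast; ring
        rw [e, hper s (t + ((↑k : ℤ) : ℝ)), ih]
    | pred k ih =>
        have e : t + ((-↑k - 1 : ℤ) : ℝ) = t + ((-↑k : ℤ) : ℝ) - 1 := by push_cast; ring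
        rw [e]
        have h := hper s (t + ((-↑k : ℤ) : ℝ) - 1)
        rw [sub_add_cancel] at h
        rw [← h, ih]
  -- main estimate
  have main : ∀ s ≥ (0:ℝ), ∀ t : ℝ, |g (s, t)| ≤ C * Real.exp (-ν * s) * I ^ (1 / p) := by
    intro s hs t
    set t₀ : ℝ := Int.fract t with ht₀
    have hfr : g (s, t) = g (s, t₀) := by
      rw [ht₀, Int.fract]
      rw [show t - ↑⌊t⌋ = t + ((-⌊t⌋ : ℤ) : ℝ) by push_cast; ring]
      exact (hgZ s t _).symm
    have hmor := morrey hp hg (s, t₀)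
    simp only at hmor
    -- switch to the fundamental domain in the second variable
    have hint2 : ∀ (c d : ℝ), IntegrableOn H (Icc s (s+1) ×ˢ Icc c d) (volume.prod volume) := by
      intro c d
      rw [← MeasureTheory.Measure.volume_eq_prod]
      exact hHcont.continuousOn.integrableOn_compact (isCompact_Icc.prod isCompact_Icc)
    have hshift : ∫ y in Icc s (s+1) ×ˢ Icc t₀ (t₀+1), H y
        = ∫ y in Icc s (s+1) ×ˢ Icc 0 1, H y := by
      rw [MeasureTheory.Measure.volume_eq_prod, setIntegral_prod _ (hint2 t₀ (t₀+1)),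
        setIntegral_prod _ (hint2 0 1)]
      refine setIntegral_congr_fun measurableSet_Icc fun r _ => ?_
      have hper1 : Function.Periodic (fun u => H (r, u)) 1 := fun u => hHper r u
      have h1 : ∫ u in Icc t₀ (t₀+1), H (r, u) = ∫ u in t₀..(t₀+1), H (r, u) := by
        rw [integral_Icc_eq_integral_Ioc, intervalIntegral.integral_of_le (by linarith)]
      have h2 : ∫ u in Icc (0:ℝ) 1, H (r, u) = ∫ u in (0:ℝ)..(0+1), H (r, u) := by
        rw [integral_Icc_eq_integral_Ioc, intervalIntegral.integral_of_le (by linarith)]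
        norm_num
      rw [h1, h2, hper1.intervalIntegral_add_eq t₀ 0]
    -- weighted bound
    have hsub : Icc s (s+1) ×ˢ Icc (0:ℝ) 1 ⊆ Set.Ici (0:ℝ) ×ˢ Set.Icc (0:ℝ) 1 :=
      Set.prod_mono (fun r hr => le_trans hs hr.1) subset_rfl
    have hQ'm : MeasurableSet (Icc s (s+1) ×ˢ Icc (0:ℝ) 1) :=
      measurableSet_Icc.prod measurableSet_Icc
    have hQ'c : IsCompact (Icc s (s+1) ×ˢ Icc (0:ℝ) 1) :=
      isCompact_Icc.prod isCompact_Icc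
    have hw : Real.exp (p * ν * s) * ∫ y in Icc s (s+1) ×ˢ Icc (0:ℝ) 1, H y ≤ I := by
      rw [← MeasureTheory.integral_const_mul]
      have step : ∫ y in Icc s (s+1) ×ˢ Icc (0:ℝ) 1, Real.exp (p * ν * s) * H y
          ≤ ∫ y in Icc s (s+1) ×ˢ Icc (0:ℝ) 1, F y := by
        refine setIntegral_mono_on ?_ ?_ hQ'm ?_
        · exact (continuous_const.mul hHcont).continuousOn.integrableOn_compact hQ'c
        · exact hFcont.continuousOn.integrableOn_compact hQ'c
        · intro y hy
          rw [hF]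
          refine mul_le_mul_of_nonneg_right ?_ (hH0 y)
          refine Real.exp_le_exp.2 ?_
          exact mul_le_mul_of_nonneg_left hy.1.1 (by positivity)
      refine step.trans ?_
      exact setIntegral_mono_set hint
        (Filter.Eventually.of_forall fun q => hF0 q)
        (HasSubset.Subset.eventuallyLE hsub)
    have hwint : ∫ y in Icc s (s+1) ×ˢ Icc (0:ℝ) 1, H y ≤ Real.exp (-(p * ν * s)) * I := by
      have h := mul_le_mul_of_nonneg_left hw (Real.exp_nonneg (-(p * ν * s)))
      rwa [← mul_assoc, ← Real.exp_add, neg_add_cancel, Real.exp_zero, one_mul] at h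
    -- rpow step
    have hQH0 : 0 ≤ ∫ y in Icc s (s+1) ×ˢ Icc (0:ℝ) 1, H y :=
      setIntegral_nonneg hQ'm fun y _ => hH0 y
    have hrpow : (∫ y in Icc s (s+1) ×ˢ Icc (0:ℝ) 1, H y) ^ (1/p)
        ≤ Real.exp (-ν * s) * I ^ (1/p) := by
      have h1 : (∫ y in Icc s (s+1) ×ˢ Icc (0:ℝ) 1, H y) ^ (1/p)
          ≤ (Real.exp (-(p * ν * s)) * I) ^ (1/p) :=
        Real.rpow_le_rpow hQH0 hwint (by positivity)
      rw [Real.mul_rpow (Real.exp_nonneg _) hI0] at h1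
      rw [← Real.exp_mul] at h1
      have e : -(p * ν * s) * (1/p) = -ν * s := by
        field_simp
      rwa [e] at h1
    calc |g (s, t)| = |g (s, t₀)| := by rw [hfr]
      _ ≤ C * (∫ y in Icc s (s+1) ×ˢ Icc t₀ (t₀+1), H y) ^ (1/p) := hmor
      _ = C * (∫ y in Icc s (s+1) ×ˢ Icc (0:ℝ) 1, H y) ^ (1/p) := by rw [hshift]
      _ ≤ C * (Real.exp (-ν * s) * I ^ (1/p)) := by
          exact mul_le_mul_of_nonneg_left hrpow hCpos.le
      _ = C * Real.exp (-ν * s) * I ^ (1/p) := by ring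
  refine ⟨main, ?_⟩
  -- the supremum tends to zero
  have hlim : Filter.Tendsto (fun s : ℝ => C * Real.exp (-ν * s) * I ^ (1/p))
      Filter.atTop (nhds 0) := by
    have h1 : Filter.Tendsto (fun s : ℝ => -ν * s) Filter.atTop Filter.atBot :=
      Filter.Tendsto.const_mul_atTop_of_neg (neg_lt_zero.2 hν) Filter.tendsto_id
    have h2 : Filter.Tendsto (fun s : ℝ => Real.exp (-ν * s)) Filter.atTop (nhds 0) :=
      Real.tendsto_exp_atBot.comp h1
    have h3 := (h2.const_mul C).mul_const (I ^ (1/p))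
    simpa using h3
  refine squeeze_zero' ?_ ?_ hlim
  · exact Filter.Eventually.of_forall fun s => Real.iSup_nonneg fun t => abs_nonneg _
  · filter_upwards [Filter.eventually_ge_atTop (0:ℝ)] with s hs
    exact Real.iSup_le (fun t => main s hs t) (by positivity)
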